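/- A group G is ICC if and only if every finite index subgroup of G has trivial center. -/

import Mathlib

/-- The conjugation map `G ⧸ centralizer {g} → G`, `⟦h⟧ ↦ h * g * h⁻¹`. -/
noncomputable def conjMap {G : Type*} [Group G] (g : G) :
    G ⧸ Subgroup.centralizer {g} → G :=
  Quotient.lift (fun h => h * g * h⁻¹) (by
    intro a b hab
    have h : a⁻¹ * b ∈ Subgroup.centralizer {g} := QuotientGroup.leftRel_apply.mp hab
    have hc : g * (a⁻¹ * b) = (a⁻¹ * b) * g := h g (Set.mem_singleton g)
    show a * g * a⁻¹ = b * g * b⁻¹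
    have : b * g = a * (g * (a⁻¹ * b)) := by rw [hc]; group
    calc a * g * a⁻¹ = a * (g * (a⁻¹ * b)) * b⁻¹ := by group
      _ = b * g * b⁻¹ := by rw [← this])

theorem conjMap_injective {G : Type*} [Group G] (g : G) :
    Function.Injective (conjMap g) := by
  intro x y
  induction x using Quotient.inductionOn with
  | h a =>
  induction y using Quotient.inductionOn with
  | h b =>
  intro hab
  have hab' : a * g * a⁻¹ = b * g * b⁻¹ := hab
  refine Quotient.sound (QuotientGroup.leftRel_apply.mpr ?_)
  intro m hm
  rw [Set.mem_singleton_iff] at hm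
  rw [hm]
  have : g * (a⁻¹ * b) = a⁻¹ * (a * g * a⁻¹) * b := by group
  rw [this, hab']
  group

theorem conjMap_range {G : Type*} [Group G] (g : G) :
    Set.range (conjMap g) = {x : G | ∃ h : G, h * g * h⁻¹ = x} := by
  ext x
  constructor
  · rintro ⟨q, rfl⟩
    induction q using Quotient.inductionOn with
    | h a => exact ⟨a, rfl⟩
  · rintro ⟨h, rfl⟩
    exact ⟨⟦h⟧, rfl⟩

theorem stmt_1 (G : Type*) [Group G] :
    (∀ g : G, g ≠ 1 → Set.Infinite {x : G | ∃ h : G, h * g * h⁻¹ = x}) ↔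
    (∀ H : Subgroup G, H.FiniteIndex → Subgroup.center H = ⊥) := by
  constructor
  · intro hicc H hH
    rw [eq_bot_iff]
    intro z hz
    by_contra hz1
    have hzG : (z : G) ≠ 1 := fun h => hz1 (Subtype.ext h)
    -- H ≤ centralizer {z}
    have hle : H ≤ Subgroup.centralizer {(z : G)} := by
      intro h hh m hm
      rw [Set.mem_singleton_iff] at hm
      subst hm
      have h1 : (⟨h, hh⟩ : H) * z = z * ⟨h, hh⟩ := Subgroup.mem_center_iff.mp hz _
      have h2 := congrArg (Subtype.val) h1
      simpa using h2.symm
    have : (Subgroup.centralizer {(z : G)}).FiniteIndex :=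
      Subgroup.finiteIndex_of_le hle
    have hfin : Finite (G ⧸ Subgroup.centralizer {(z : G)}) :=
      Subgroup.finite_quotient_of_finiteIndex
    have : ({x : G | ∃ h : G, h * (z : G) * h⁻¹ = x}).Finite := by
      rw [← conjMap_range]
      exact Set.finite_range _
    exact (hicc (z : G) hzG) this
  · intro hcen g hg
    by_contra hfin
    rw [Set.not_infinite] at hfin
    have hinj := conjMap_injective g
    have : Finite (G ⧸ Subgroup.centralizer {g}) := by
      have : Set.range (conjMap g) ⊆ {x : G | ∃ h : G, h * g * h⁻¹ = x} :=
        (conjMap_range g).le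
      have hr : (Set.range (conjMap g)).Finite := hfin.subset this
      have := hr.to_subtype
      exact Finite.of_injective_finite_range hinj
    have hFI : (Subgroup.centralizer {g}).FiniteIndex :=
      Subgroup.finiteIndex_of_finite_quotient
    have hgmem : g ∈ Subgroup.centralizer {g} := by
      intro m hm
      rw [Set.mem_singleton_iff] at hm
      subst hm
      rfl
    have hgc : (⟨g, hgmem⟩ : Subgroup.centralizer {g}) ∈
        Subgroup.center (Subgroup.centralizer {g}) := by
      rw [Subgroup.mem_center_iff]
      intro k
      have := k.2 g (Set.mem_singleton g)
      exact Subtype.ext (by push_cast; exact this.symm)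
    rw [hcen _ hFI, Subgroup.mem_bot] at hgc
    exact hg (congrArg Subtype.val hgc)
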